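/- arXiv:1812.11511 — 4 statements merged into one kernel-verified Lean document; each statement's English description precedes it below -/
import Mathlib

section
/- Let A be a residuated lattice and X ⊆ A. Then the filter F(X) generated by X equals the intersection of all prime filters of A containing X (where the intersection over the empty family is A). -/
class ResiduatedLattice (α : Type*) extends Lattice α, CommMonoid α, BoundedOrder α where
  rimp : α → α → α
  one_eq_top : (1 : α) = ⊤
  adjunction : ∀ x y z : α, x * y ≤ z ↔ x ≤ rimp y z

variable {α : Type*} [ResiduatedLattice α]

/-- A filter of a residuated lattice: nonempty, closed under `⊙` and upward closed. -/
def IsFilter (F : Set α) : Prop :=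
  F.Nonempty ∧ (∀ x ∈ F, ∀ y ∈ F, x * y ∈ F) ∧ ∀ x ∈ F, ∀ y : α, x ≤ y → y ∈ F

/-- A prime filter: a proper filter such that `x ⊔ y ∈ P` implies `x ∈ P` or `y ∈ P`. -/
def IsPrimeFilter (P : Set α) : Prop :=
  IsFilter P ∧ P ≠ Set.univ ∧ ∀ x y : α, x ⊔ y ∈ P → x ∈ P ∨ y ∈ P

/-- A `∨`-closed subset: nonempty and closed under join. -/
def IsJoinClosed (C : Set α) : Prop :=
  C.Nonempty ∧ ∀ x ∈ C, ∀ y ∈ C, x ⊔ y ∈ C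

/-- The filter generated by a set. -/
def filterGen (X : Set α) : Set α := ⋂₀ {G : Set α | IsFilter G ∧ X ⊆ G}

/-- An `X`-minimal prime filter: prime, contains `X`, minimal among primes containing `X`. -/
def IsMinPrimeOver (X P : Set α) : Prop :=
  IsPrimeFilter P ∧ X ⊆ P ∧ ∀ Q : Set α, IsPrimeFilter Q → X ⊆ Q → Q ⊆ P → Q = P

/-- `ω_F(X) = {a | x ∨ a ∈ F for some x ∈ X}`. -/
def omegaF (F X : Set α) : Set α := {a : α | ∃ x ∈ X, x ⊔ a ∈ F}

/-- The coannihilator `(F : x) = {a | x ∨ a ∈ F}`. -/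
def coann (F : Set α) (x : α) : Set α := {a : α | x ⊔ a ∈ F}

/-- `D_F(H) = {a | x ∨ a ∈ F for some x ∉ H}`, the set of `F`-divisors of `H`. -/
def divisorsF (F H : Set α) : Set α := {a : α | ∃ x ∉ H, x ⊔ a ∈ F}

/-- A lattice ideal: nonempty, closed under join and downward closed. -/
def IsLatticeIdeal (I : Set α) : Prop :=
  I.Nonempty ∧ (∀ x ∈ I, ∀ y ∈ I, x ⊔ y ∈ I) ∧ ∀ x y : α, x ≤ y → y ∈ I → x ∈ I

/-- The lattice ideal generated by a set. -/
def idealGen (X : Set α) : Set α := ⋂₀ {I : Set α | IsLatticeIdeal I ∧ X ⊆ I}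

/-- An `ω_F`-filter: a filter of the form `ω_F(I)` for some lattice ideal `I`. -/
def IsOmegaFilter (F H : Set α) : Prop :=
  IsFilter H ∧ ∃ I : Set α, IsLatticeIdeal I ∧ H = omegaF F I

lemma rl_le_one (x : α) : x ≤ 1 := by
  rw [ResiduatedLattice.one_eq_top (α := α)]; exact le_top

lemma rl_mul_le_mul_right {a b : α} (h : a ≤ b) (c : α) : a * c ≤ b * c :=
  (ResiduatedLattice.adjunction a c (b * c)).mpr
    (h.trans ((ResiduatedLattice.adjunction b c (b * c)).mp le_rfl))

lemma rl_mul_le_mul_left {a b : α} (h : a ≤ b) (c : α) : c * a ≤ c * b := by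
  rw [mul_comm c a, mul_comm c b]; exact rl_mul_le_mul_right h c

lemma rl_mul_le_mul' {a b c d : α} (h1 : a ≤ b) (h2 : c ≤ d) : a * c ≤ b * d :=
  (rl_mul_le_mul_right h1 c).trans (rl_mul_le_mul_left h2 b)

lemma rl_mul_le_left (a b : α) : a * b ≤ a := by
  have := rl_mul_le_mul_left (rl_le_one b) a
  rwa [mul_one] at this

lemma rl_mul_le_right (a b : α) : a * b ≤ b := by rw [mul_comm]; exact rl_mul_le_left b a

lemma rl_sup_mul (x y c : α) : (x ⊔ y) * c = x * c ⊔ y * c := by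
  apply le_antisymm
  · apply (ResiduatedLattice.adjunction _ _ _).mpr
    apply sup_le
    · exact (ResiduatedLattice.adjunction _ _ _).mp (le_sup_left : x * c ≤ _)
    · exact (ResiduatedLattice.adjunction _ _ _).mp (le_sup_right : y * c ≤ _)
  · exact sup_le (rl_mul_le_mul_right le_sup_left c) (rl_mul_le_mul_right le_sup_right c)

lemma rl_pow_sup (x y : α) : ∀ n m : ℕ, (x ⊔ y) ^ (n + m) ≤ x ^ n ⊔ y ^ m := by
  intro n
  induction n with
  | zero =>
    intro m
    exact le_trans (rl_le_one _) (by rw [pow_zero]; exact le_sup_left)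
  | succ n ih =>
    intro m
    induction m with
    | zero =>
      exact le_trans (rl_le_one _) (by rw [pow_zero]; exact le_sup_right)
    | succ m ihm =>
      have hk : (n + 1) + (m + 1) = (n + (m + 1)) + 1 := by ring
      rw [hk, pow_succ, mul_comm, rl_sup_mul]
      apply sup_le
      · -- x * (x⊔y)^(n+(m+1)) ≤ x^(n+1) ⊔ y^(m+1)
        calc x * (x ⊔ y) ^ (n + (m + 1)) ≤ x * (x ^ n ⊔ y ^ (m + 1)) :=
              rl_mul_le_mul_left (ih (m + 1)) x
          _ = x * x ^ n ⊔ x * y ^ (m + 1) := by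
              rw [mul_comm x (x ^ n ⊔ y ^ (m+1)), rl_sup_mul, mul_comm (x ^ n) x,
                mul_comm (y ^ (m+1)) x]
          _ ≤ x ^ (n + 1) ⊔ y ^ (m + 1) := by
              apply sup_le
              · rw [mul_comm, ← pow_succ]; exact le_sup_left
              · exact (rl_mul_le_right x _).trans le_sup_right
      · -- y * (x⊔y)^(n+(m+1)) ≤ x^(n+1) ⊔ y^(m+1)
        have hk2 : n + (m + 1) = (n + 1) + m := by ring
        calc y * (x ⊔ y) ^ (n + (m + 1)) ≤ y * (x ^ (n + 1) ⊔ y ^ m) := by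
              rw [hk2]; exact rl_mul_le_mul_left ihm y
          _ = y * x ^ (n + 1) ⊔ y * y ^ m := by
              rw [mul_comm y (x ^ (n+1) ⊔ y ^ m), rl_sup_mul, mul_comm (x ^ (n+1)) y,
                mul_comm (y ^ m) y]
          _ ≤ x ^ (n + 1) ⊔ y ^ (m + 1) := by
              apply sup_le
              · exact (rl_mul_le_right y _).trans le_sup_left
              · rw [mul_comm, ← pow_succ]; exact le_sup_right

lemma one_mem_of_isFilter {F : Set α} (hF : IsFilter F) : (1 : α) ∈ F := by
  obtain ⟨⟨z, hz⟩, _, hup⟩ := hF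
  exact hup z hz 1 (rl_le_one z)

lemma isFilter_filterGen (X : Set α) : IsFilter (filterGen X) ∧ X ⊆ filterGen X := by
  constructor
  · refine ⟨⟨1, ?_⟩, ?_, ?_⟩
    · intro G hG; exact one_mem_of_isFilter hG.1
    · intro x hx y hy G hG
      exact hG.1.2.1 x (hx G hG) y (hy G hG)
    · intro x hx y hxy G hG
      exact hG.1.2.2 x (hx G hG) y hxy
  · intro x hx G hG
    exact hG.2 hx

/-- The filter generated by a filter `P` together with an element `x`. -/
def extFilter (P : Set α) (x : α) : Set α := {b : α | ∃ p ∈ P, ∃ n : ℕ, p * x ^ n ≤ b}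

lemma extFilter_spec {P : Set α} (hP : IsFilter P) (x : α) :
    IsFilter (extFilter P x) ∧ P ⊆ extFilter P x ∧ x ∈ extFilter P x := by
  obtain ⟨⟨z, hz⟩, hmul, hup⟩ := hP
  have hPsub : P ⊆ extFilter P x := by
    intro p hp
    exact ⟨p, hp, 0, by rw [pow_zero, mul_one]⟩
  refine ⟨⟨⟨z, hPsub hz⟩, ?_, ?_⟩, hPsub, ⟨z, hz, 1, by rw [pow_one]; exact rl_mul_le_right z x⟩⟩
  · rintro a ⟨p, hp, n, hpn⟩ b ⟨q, hq, m, hqm⟩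
    refine ⟨p * q, hmul p hp q hq, n + m, ?_⟩
    calc p * q * x ^ (n + m) = (p * x ^ n) * (q * x ^ m) := by rw [pow_add, mul_mul_mul_comm]
      _ ≤ a * b := rl_mul_le_mul' hpn hqm
  · rintro a ⟨p, hp, n, hpn⟩ b hab
    exact ⟨p, hp, n, hpn.trans hab⟩

/-- Prime filter separation. -/
lemma exists_prime_filter {F : Set α} (hF : IsFilter F) {a : α} (ha : a ∉ F) :
    ∃ P : Set α, IsPrimeFilter P ∧ F ⊆ P ∧ a ∉ P := by
  set S : Set (Set α) := {G : Set α | IsFilter G ∧ F ⊆ G ∧ a ∉ G} with hS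
  have hchain : ∀ c ⊆ S, IsChain (· ⊆ ·) c → c.Nonempty → ∃ ub ∈ S, ∀ s ∈ c, s ⊆ ub := by
    intro c hcS hc ⟨G0, hG0⟩
    refine ⟨⋃₀ c, ⟨⟨⟨1, G0, hG0, one_mem_of_isFilter (hcS hG0).1⟩, ?_, ?_⟩, ?_, ?_⟩,
      fun s hs => Set.subset_sUnion_of_mem hs⟩
    · rintro x ⟨G1, hG1, hx⟩ y ⟨G2, hG2, hy⟩
      rcases hc.total hG1 hG2 with h | h
      · exact ⟨G2, hG2, (hcS hG2).1.2.1 x (h hx) y hy⟩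
      · exact ⟨G1, hG1, (hcS hG1).1.2.1 x hx y (h hy)⟩
    · rintro x ⟨G1, hG1, hx⟩ y hxy
      exact ⟨G1, hG1, (hcS hG1).1.2.2 x hx y hxy⟩
    · exact (hcS hG0).2.1.trans (Set.subset_sUnion_of_mem hG0)
    · rintro ⟨G1, hG1, haG1⟩
      exact (hcS hG1).2.2 haG1
  obtain ⟨P, hFP, hPS, hPmax⟩ := zorn_subset_nonempty S hchain F ⟨hF, le_refl F, ha⟩
  obtain ⟨hPfil, hFsubP, haP⟩ := hPS
  refine ⟨P, ⟨hPfil, ?_, ?_⟩, hFsubP, haP⟩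
  · intro h; exact haP (h ▸ Set.mem_univ a)
  · intro x y hxy
    by_contra hcon
    push_neg at hcon
    obtain ⟨hx, hy⟩ := hcon
    -- extFilter P x must contain a, else contradicts maximality
    have key : ∀ z : α, z ∉ P → a ∈ extFilter P z := by
      intro z hz
      obtain ⟨hfil, hsub, hmem⟩ := extFilter_spec hPfil z
      by_contra haz
      have hmemS : extFilter P z ∈ S := ⟨hfil, hFsubP.trans hsub, haz⟩
      have := hPmax hmemS hsub
      exact hz (this hmem)
    obtain ⟨p, hp, n, hpn⟩ := key x hx
    obtain ⟨q, hq, m, hqm⟩ := key y hy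
    have hpow : ∀ k : ℕ, (x ⊔ y) ^ k ∈ P := by
      intro k
      induction k with
      | zero => rw [pow_zero]; exact one_mem_of_isFilter hPfil
      | succ k ih => rw [pow_succ]; exact hPfil.2.1 _ ih _ hxy
    have hPprod : p * q * (x ⊔ y) ^ (n + m) ∈ P :=
      hPfil.2.1 _ (hPfil.2.1 p hp q hq) _ (hpow (n + m))
    apply haP
    apply hPfil.2.2 _ hPprod
    calc p * q * (x ⊔ y) ^ (n + m) ≤ p * q * (x ^ n ⊔ y ^ m) :=
          rl_mul_le_mul_left (rl_pow_sup x y n m) (p * q)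
      _ = p * q * x ^ n ⊔ p * q * y ^ m := by
          rw [mul_comm (p*q) (x ^ n ⊔ y ^ m), rl_sup_mul, mul_comm (x ^ n) (p*q),
            mul_comm (y ^ m) (p*q)]
      _ ≤ a ⊔ a := by
          apply sup_le_sup
          · exact le_trans (rl_mul_le_mul_right (rl_mul_le_left p q) _) hpn
          · exact le_trans (rl_mul_le_mul_right (rl_mul_le_right p q) _) hqm
      _ = a := sup_idem a

/-- Corollary 2.5(2): the filter generated by `X` is the intersection of all
prime filters containing `X`. -/
theorem stmt_1 (X : Set α) :
    filterGen X = ⋂₀ {P : Set α | IsPrimeFilter P ∧ X ⊆ P} := by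
  obtain ⟨hfil, hsub⟩ := isFilter_filterGen X
  apply le_antisymm
  · intro a ha P hP
    exact ha P ⟨hP.1.1, hP.2⟩
  · intro a ha
    by_contra haF
    obtain ⟨P, hPprime, hFP, haP⟩ := exists_prime_filter hfil haF
    exact haP (ha P ⟨hPprime, hsub.trans hFP⟩)
end

section
/- Let A be a residuated lattice, F a filter of A, and C a ∨-closed subset of A. Then ω_F(C) = {a ∈ A | c ∨ a ∈ F for some c ∈ C} is a filter of A. -/
variable {α : Type*} [ResiduatedLattice α]

lemma rl_mul_le_mul_left_s4 {x x' y : α} (h : x ≤ x') : x * y ≤ x' * y := by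
  have h1 : x' ≤ ResiduatedLattice.rimp y (x' * y) :=
    (ResiduatedLattice.adjunction x' y (x' * y)).mp le_rfl
  exact (ResiduatedLattice.adjunction x y (x' * y)).mpr (h.trans h1)

lemma rl_mul_le_left_s4 {x y : α} : x * y ≤ x := by
  have : y * x ≤ ⊤ * x := rl_mul_le_mul_left_s4 le_top
  rw [← ResiduatedLattice.one_eq_top, one_mul] at this
  rw [mul_comm]; exact this

lemma rl_key {e a b : α} : (e ⊔ a) * (e ⊔ b) ≤ e ⊔ a * b := by
  apply (ResiduatedLattice.adjunction _ _ _).mpr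
  apply sup_le
  · exact (ResiduatedLattice.adjunction _ _ _).mp (rl_mul_le_left_s4.trans le_sup_left)
  · apply (ResiduatedLattice.adjunction _ _ _).mp
    rw [mul_comm]
    apply (ResiduatedLattice.adjunction _ _ _).mpr
    apply sup_le
    · exact (ResiduatedLattice.adjunction _ _ _).mp
        ((rl_mul_le_left_s4.trans le_sup_left : e * a ≤ e ⊔ a * b))
    · exact (ResiduatedLattice.adjunction _ _ _).mp (le_sup_right.trans_eq' (mul_comm _ _))

/-- Proposition 3.3: for a filter `F` and a `∨`-closed set `C`,
`ω_F(C)` is a filter. -/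
theorem stmt_4 (F C : Set α) (hF : IsFilter F) (hC : IsJoinClosed C) :
    IsFilter (omegaF F C) := by
  obtain ⟨hne, hmul, hup⟩ := hF
  obtain ⟨⟨c0, hc0⟩, hjoin⟩ := hC
  have htop : (⊤ : α) ∈ F := by
    obtain ⟨f, hf⟩ := hne; exact hup f hf ⊤ le_top
  refine ⟨⟨⊤, c0, hc0, by simpa using htop⟩, ?_, ?_⟩
  · rintro a ⟨c, hcC, hcF⟩ b ⟨d, hdC, hdF⟩
    refine ⟨c ⊔ d, hjoin c hcC d hdC, ?_⟩
    have h1 : (c ⊔ a) * (d ⊔ b) ∈ F := hmul _ hcF _ hdF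
    apply hup _ h1
    calc (c ⊔ a) * (d ⊔ b) ≤ ((c ⊔ d) ⊔ a) * ((c ⊔ d) ⊔ b) := by
          have := rl_mul_le_mul_left_s4 (y := d ⊔ b)
            (sup_le_sup_right (le_sup_left : c ≤ c ⊔ d) a)
          refine this.trans ?_
          rw [mul_comm, mul_comm ((c ⊔ d) ⊔ a)]
          exact rl_mul_le_mul_left_s4 (sup_le_sup_right le_sup_right b)
      _ ≤ (c ⊔ d) ⊔ a * b := rl_key
  · rintro a ⟨c, hcC, hcF⟩ b hab
    exact ⟨c, hcC, hup _ hcF _ (sup_le_sup_left hab c)⟩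
end

section
/- Let A be a residuated lattice, F a filter of A, and C a ∨-closed subset of A. The following are equivalent: (1) F ∩ C = ∅; (2) ω_F(C) ≠ A; (3) ω_F(C) ∩ C = ∅. -/
variable {α : Type*} [ResiduatedLattice α]

/-- Proposition 3.4: for a filter `F` and a `∨`-closed set `C`, the following
are equivalent: `F ∩ C = ∅`; `ω_F(C)` is proper; `ω_F(C) ∩ C = ∅`. -/
theorem stmt_5 (F C : Set α) (hF : IsFilter F) (hC : IsJoinClosed C) :
    (F ∩ C = ∅ ↔ omegaF F C ≠ Set.univ) ∧
    (F ∩ C = ∅ ↔ omegaF F C ∩ C = ∅) := by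

  obtain ⟨hne, hmul, hup⟩ := hF
  obtain ⟨⟨c0, hc0⟩, hjoin⟩ := hC
  -- key: F ∩ C = ∅ → ω_F(C) ∩ C = ∅
  have key : F ∩ C = ∅ → omegaF F C ∩ C = ∅ := by
    intro h
    ext a
    simp only [Set.mem_inter_iff, Set.mem_empty_iff_false, iff_false, not_and]
    rintro ⟨x, hxC, hxa⟩ haC
    have : x ⊔ a ∈ F ∩ C := ⟨hxa, hjoin x hxC a haC⟩
    rw [h] at this; exact this
  -- if F ∩ C ≠ ∅ then ω_F(C) = univ
  have key2 : F ∩ C ≠ ∅ → omegaF F C = Set.univ := by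
    intro h
    obtain ⟨c, hcF, hcC⟩ := Set.nonempty_iff_ne_empty.mpr h
    ext a
    simp only [Set.mem_univ, iff_true]
    exact ⟨c, hcC, hup c hcF _ le_sup_left⟩
  constructor
  · constructor
    · intro h hu
      have := key h
      have hc0' : c0 ∈ omegaF F C := hu ▸ Set.mem_univ c0
      have : c0 ∈ omegaF F C ∩ C := ⟨hc0', hc0⟩
      rw [‹omegaF F C ∩ C = ∅›] at this; exact this
    · intro h
      by_contra hne'
      exact h (key2 hne')
  · constructor
    · exact key
    · intro h
      by_contra hne'
      have := key2 hne'
      rw [this] at h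
      have : c0 ∈ (Set.univ : Set α) ∩ C := ⟨Set.mem_univ c0, hc0⟩
      rw [h] at this; exact this
end

section
/- Let A be a residuated lattice, F a filter of A, and C a ∨-closed subset of A. Then ω_F(C) = ⋂{m | m is an F-minimal prime filter of A and m ∩ C = ∅} (where the intersection over the empty family is A). -/
variable {α : Type*} [ResiduatedLattice α]

namespace RLAux

open ResiduatedLattice

lemma le_one (x : α) : x ≤ 1 := by rw [one_eq_top]; exact le_top

lemma mul_mono_left {x y : α} (h : x ≤ y) (z : α) : x * z ≤ y * z :=
  (adjunction x z (y * z)).mpr (h.trans ((adjunction y z (y * z)).mp le_rfl))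

lemma rl_mul_le_mul {a b c d : α} (h1 : a ≤ b) (h2 : c ≤ d) : a * c ≤ b * d := by
  calc a * c ≤ b * c := mul_mono_left h1 c
    _ = c * b := mul_comm _ _
    _ ≤ d * b := mul_mono_left h2 b
    _ = b * d := mul_comm _ _

lemma mul_le_left (x y : α) : x * y ≤ x := by
  have := mul_mono_left (le_one y) x
  rwa [one_mul, mul_comm] at this

lemma mul_le_right (x y : α) : x * y ≤ y := by
  rw [mul_comm]; exact mul_le_left y x

lemma rl_mul_sup (x y z : α) : x * (y ⊔ z) = x * y ⊔ x * z := by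
  apply le_antisymm
  · rw [mul_comm]
    refine (adjunction _ _ _).mpr (sup_le ?_ ?_)
    · exact (adjunction y x _).mp (by rw [mul_comm]; exact le_sup_left)
    · exact (adjunction z x _).mp (by rw [mul_comm]; exact le_sup_right)
  · exact sup_le (rl_mul_le_mul le_rfl le_sup_left) (rl_mul_le_mul le_rfl le_sup_right)

lemma sup_pow_le (x y : α) : ∀ n m : ℕ, (x ⊔ y) ^ (n + m) ≤ x ^ n ⊔ y ^ m := by
  intro n
  induction n with
  | zero =>
    intro m
    simpa using ((le_one _).trans (le_sup_left : (1:α) ≤ 1 ⊔ y ^ m))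
  | succ n ihn =>
    intro m
    induction m with
    | zero =>
      simpa using ((le_one _).trans (le_sup_right : (1:α) ≤ x ^ (n+1) ⊔ 1))
    | succ m ihm =>
      have hA1 : (x ⊔ y) ^ (n + (m + 1)) ≤ x ^ n ⊔ y ^ (m + 1) := ihn (m + 1)
      have hA2 : (x ⊔ y) ^ (n + (m + 1)) ≤ x ^ (n + 1) ⊔ y ^ m := by
        have : n + (m + 1) = n + 1 + m := by omega
        rw [this]; exact ihm
      have key : (x ⊔ y) ^ (n + 1 + (m + 1)) = (x ⊔ y) ^ (n + (m + 1)) * (x ⊔ y) := by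
        rw [← pow_succ]; ring_nf
      rw [key, rl_mul_sup]
      apply sup_le
      · calc (x ⊔ y) ^ (n + (m + 1)) * x ≤ (x ^ n ⊔ y ^ (m + 1)) * x := mul_mono_left hA1 x
          _ = x ^ n * x ⊔ y ^ (m + 1) * x := by
                rw [mul_comm, rl_mul_sup, mul_comm x (x ^ n), mul_comm x (y ^ (m+1))]
          _ ≤ x ^ (n + 1) ⊔ y ^ (m + 1) := sup_le (by rw [← pow_succ]; exact le_sup_left)
              ((mul_le_left _ _).trans le_sup_right)
      · calc (x ⊔ y) ^ (n + (m + 1)) * y ≤ (x ^ (n + 1) ⊔ y ^ m) * y := mul_mono_left hA2 y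
          _ = x ^ (n + 1) * y ⊔ y ^ m * y := by
                rw [mul_comm, rl_mul_sup, mul_comm y (x ^ (n+1)), mul_comm y (y ^ m)]
          _ ≤ x ^ (n + 1) ⊔ y ^ (m + 1) := sup_le ((mul_le_left _ _).trans le_sup_left)
              (by rw [← pow_succ]; exact le_sup_right)

lemma filter_one_mem {F : Set α} (hF : IsFilter F) : (1 : α) ∈ F := by
  obtain ⟨⟨p, hp⟩, _, hup⟩ := hF
  exact hup p hp 1 (le_one p)

lemma filter_pow_mem {F : Set α} (hF : IsFilter F) {x : α} (hx : x ∈ F) (n : ℕ) : x ^ n ∈ F := by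
  induction n with
  | zero => simpa using filter_one_mem hF
  | succ n ih => rw [pow_succ]; exact hF.2.1 _ ih _ hx

/-- Filter generated by a filter and one element. -/
def fgen (M : Set α) (x : α) : Set α := {z | ∃ p ∈ M, ∃ n : ℕ, p * x ^ n ≤ z}

lemma fgen_filter {M : Set α} (hM : IsFilter M) (x : α) : IsFilter (fgen M x) := by
  obtain ⟨⟨p0, hp0⟩, hmul, hup⟩ := hM
  refine ⟨⟨p0, p0, hp0, 0, by simp⟩, ?_, ?_⟩
  · rintro z ⟨p, hp, n, hpn⟩ w ⟨q, hq, k, hqk⟩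
    have key : p * q * x ^ (n + k) = (p * x ^ n) * (q * x ^ k) := by
      rw [pow_add]; exact mul_mul_mul_comm p q (x ^ n) (x ^ k)
    exact ⟨p * q, hmul p hp q hq, n + k, by rw [key]; exact rl_mul_le_mul hpn hqk⟩
  · rintro z ⟨p, hp, n, hpn⟩ w hzw
    exact ⟨p, hp, n, hpn.trans hzw⟩

lemma subset_fgen (M : Set α) (x : α) : M ⊆ fgen M x :=
  fun p hp => ⟨p, hp, 0, by simp⟩

lemma mem_fgen {M : Set α} (hM : IsFilter M) (x : α) : x ∈ fgen M x := by
  obtain ⟨p, hp⟩ := hM.1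
  exact ⟨p, hp, 1, by rw [pow_one]; exact mul_le_right p x⟩

/-- Prime separation: a filter disjoint from a nonempty join-closed set extends to a prime
filter disjoint from it. -/
lemma exists_prime_sep (F S : Set α) (hF : IsFilter F) (hSne : S.Nonempty)
    (hSj : ∀ x ∈ S, ∀ y ∈ S, x ⊔ y ∈ S) (hd : ∀ s ∈ S, s ∉ F) :
    ∃ P : Set α, IsPrimeFilter P ∧ F ⊆ P ∧ ∀ s ∈ S, s ∉ P := by
  set T : Set (Set α) := {G | IsFilter G ∧ F ⊆ G ∧ ∀ s ∈ S, s ∉ G} with hT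
  obtain ⟨M, hFM, hMmax⟩ : ∃ M, F ⊆ M ∧ Maximal (· ∈ T) M := by
    apply zorn_subset_nonempty
    · intro c hc hchain hcne
      refine ⟨⋃₀ c, ⟨⟨?_, ?_, ?_⟩, ?_, ?_⟩, fun s hs => Set.subset_sUnion_of_mem hs⟩
      · obtain ⟨G, hG⟩ := hcne
        obtain ⟨p, hp⟩ := (hc hG).1.1
        exact ⟨p, G, hG, hp⟩
      · rintro a ⟨G1, hG1, ha⟩ b ⟨G2, hG2, hb⟩
        rcases hchain.total hG1 hG2 with h | h
        · exact ⟨G2, hG2, (hc hG2).1.2.1 a (h ha) b hb⟩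
        · exact ⟨G1, hG1, (hc hG1).1.2.1 a ha b (h hb)⟩
      · rintro a ⟨G, hG, ha⟩ b hab
        exact ⟨G, hG, (hc hG).1.2.2 a ha b hab⟩
      · obtain ⟨G, hG⟩ := hcne
        exact (hc hG).2.1.trans (Set.subset_sUnion_of_mem hG)
      · rintro s hs ⟨G, hG, hsG⟩
        exact (hc hG).2.2 s hs hsG
    · exact ⟨hF, subset_rfl, hd⟩
  obtain ⟨hMf, hFM', hMd⟩ := hMmax.1
  have hMx : ∀ {G : Set α}, G ∈ T → M ⊆ G → G ⊆ M := fun hG hsub => hMmax.2 hG hsub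
  refine ⟨M, ⟨hMf, ?_, ?_⟩, hFM, hMd⟩
  · obtain ⟨s, hs⟩ := hSne
    intro h; exact hMd s hs (h ▸ Set.mem_univ s)
  · intro x y hxy
    by_contra hcon
    push_neg at hcon
    obtain ⟨hx, hy⟩ := hcon
    have hGx : ∃ s ∈ S, ∃ p ∈ M, ∃ n : ℕ, p * x ^ n ≤ s := by
      by_contra h
      push_neg at h
      have hmem : fgen M x ∈ T := by
        refine ⟨fgen_filter hMf x, hFM'.trans (subset_fgen M x), ?_⟩
        rintro s hs ⟨p, hp, n, hpn⟩
        exact absurd hpn (h s hs p hp n)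
      have := hMx hmem (subset_fgen M x)
      exact hx (this (mem_fgen hMf x))
    have hGy : ∃ s ∈ S, ∃ p ∈ M, ∃ n : ℕ, p * y ^ n ≤ s := by
      by_contra h
      push_neg at h
      have hmem : fgen M y ∈ T := by
        refine ⟨fgen_filter hMf y, hFM'.trans (subset_fgen M y), ?_⟩
        rintro s hs ⟨p, hp, n, hpn⟩
        exact absurd hpn (h s hs p hp n)
      have := hMx hmem (subset_fgen M y)
      exact hy (this (mem_fgen hMf y))
    obtain ⟨s1, hs1, p1, hp1, n, hpn⟩ := hGx
    obtain ⟨s2, hs2, p2, hp2, m, hpm⟩ := hGy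
    have hAmem : p1 * p2 * (x ⊔ y) ^ (n + m) ∈ M :=
      hMf.2.1 _ (hMf.2.1 _ hp1 _ hp2) _ (filter_pow_mem hMf hxy (n + m))
    have hle : p1 * p2 * (x ⊔ y) ^ (n + m) ≤ s1 ⊔ s2 := by
      calc p1 * p2 * (x ⊔ y) ^ (n + m) ≤ p1 * p2 * (x ^ n ⊔ y ^ m) :=
            rl_mul_le_mul le_rfl (sup_pow_le x y n m)
        _ = p1 * p2 * x ^ n ⊔ p1 * p2 * y ^ m := rl_mul_sup _ _ _
        _ ≤ s1 ⊔ s2 := by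
            apply sup_le
            · refine le_trans ?_ (hpn.trans le_sup_left)
              calc p1 * p2 * x ^ n = (p1 * x ^ n) * p2 := by rw [mul_right_comm]
                _ ≤ p1 * x ^ n := mul_le_left _ _
            · refine le_trans ?_ (hpm.trans le_sup_right)
              calc p1 * p2 * y ^ m = (p2 * y ^ m) * p1 := by
                    rw [mul_comm p1 p2, mul_right_comm]
                _ ≤ p2 * y ^ m := mul_le_left _ _
    exact hMd _ (hSj s1 hs1 s2 hs2) (hMf.2.2 _ hAmem _ hle)

end RLAux

namespace RLAux

/-- Every prime filter containing `F` contains an `F`-minimal prime filter. -/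
lemma exists_minprime (F P : Set α) (hF : IsFilter F) (hP : IsPrimeFilter P) (hFP : F ⊆ P) :
    ∃ m : Set α, IsMinPrimeOver F m ∧ m ⊆ P := by
  set T : Set (Set α) := {Q | IsPrimeFilter Q ∧ F ⊆ Q ∧ Q ⊆ P} with hT
  obtain ⟨m, hmP, hmmin⟩ : ∃ m, m ⊆ P ∧ Minimal (· ∈ T) m := by
    apply zorn_superset_nonempty
    · intro c hc hchain hcne
      obtain ⟨Q0, hQ0⟩ := hcne
      refine ⟨⋂₀ c, ⟨⟨⟨?_, ?_, ?_⟩, ?_, ?_⟩, ?_, ?_⟩, fun s hs => Set.sInter_subset_of_mem hs⟩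
      · obtain ⟨p, hp⟩ := hF.1
        exact ⟨p, fun Q hQ => (hc hQ).2.1 hp⟩
      · intro a ha b hb
        exact fun Q hQ => (hc hQ).1.1.2.1 a (ha Q hQ) b (hb Q hQ)
      · intro a ha b hab Q hQ
        exact (hc hQ).1.1.2.2 a (ha Q hQ) b hab
      · intro h
        apply (hc hQ0).1.2.1
        apply Set.eq_univ_of_univ_subset
        rw [← h]
        exact Set.sInter_subset_of_mem hQ0
      · intro x y hxy
        by_contra hcon
        push_neg at hcon
        obtain ⟨hx, hy⟩ := hcon
        simp only [Set.mem_sInter] at hx hy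
        push_neg at hx hy
        obtain ⟨Q1, hQ1, hxQ1⟩ := hx
        obtain ⟨Q2, hQ2, hyQ2⟩ := hy
        rcases hchain.total hQ1 hQ2 with h | h
        · rcases (hc hQ1).1.2.2 x y (hxy Q1 hQ1) with h' | h'
          · exact hxQ1 h'
          · exact hyQ2 (h h')
        · rcases (hc hQ2).1.2.2 x y (hxy Q2 hQ2) with h' | h'
          · exact hxQ1 (h h')
          · exact hyQ2 h'
      · exact fun p hp Q hQ => (hc hQ).2.1 hp
      · exact fun a ha => (hc hQ0).2.2 (ha Q0 hQ0)
    · exact ⟨hP, hFP, subset_rfl⟩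
  obtain ⟨hmp, hFm, hmP'⟩ := hmmin.1
  refine ⟨m, ⟨hmp, hFm, fun Q hQp hFQ hQm => ?_⟩, hmP⟩
  exact Set.Subset.antisymm hQm (hmmin.2 ⟨hQp, hFQ, hQm.trans hmP'⟩ hQm)

end RLAux

/-- Corollary 3.20: `ω_F(C)` is the intersection of the `F`-minimal prime
filters disjoint from `C`. -/
theorem stmt_13 (F C : Set α) (hF : IsFilter F) (hC : IsJoinClosed C) :
    omegaF F C = ⋂₀ {m : Set α | IsMinPrimeOver F m ∧ m ∩ C = ∅} := by
  ext a
  simp only [Set.mem_sInter, Set.mem_setOf_eq]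
  constructor
  · rintro ⟨x, hxC, hxa⟩ m ⟨⟨⟨hmf, _, hmprime⟩, hFm, _⟩, hmC⟩
    rcases hmprime x a (hFm hxa) with h | h
    · exact absurd (Set.mem_inter h hxC) (by rw [hmC]; exact Set.notMem_empty x)
    · exact h
  · intro hall
    by_contra ha
    simp only [omegaF, Set.mem_setOf_eq] at ha
    push_neg at ha
    -- the join-closed set S = {x ⊔ a | x ∈ C}
    set S : Set α := (fun x => x ⊔ a) '' C with hS
    obtain ⟨c0, hc0⟩ := hC.1
    have hSne : S.Nonempty := ⟨c0 ⊔ a, c0, hc0, rfl⟩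
    have hSj : ∀ u ∈ S, ∀ v ∈ S, u ⊔ v ∈ S := by
      rintro u ⟨x, hx, rfl⟩ v ⟨y, hy, rfl⟩
      exact ⟨x ⊔ y, hC.2 x hx y hy, by rw [sup_sup_sup_comm, sup_idem]⟩
    have hd : ∀ s ∈ S, s ∉ F := by
      rintro s ⟨x, hx, rfl⟩
      exact ha x hx
    obtain ⟨P, hPprime, hFP, hPd⟩ := RLAux.exists_prime_sep F S hF hSne hSj hd
    obtain ⟨m, hmmin, hmP⟩ := RLAux.exists_minprime F P hF hPprime hFP
    have hmC : m ∩ C = ∅ := by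
      apply Set.eq_empty_iff_forall_notMem.mpr
      rintro x ⟨hxm, hxC⟩
      exact hPd (x ⊔ a) ⟨x, hxC, rfl⟩ (hPprime.1.2.2 x (hmP hxm) _ le_sup_left)
    have ham : a ∈ m := hall m ⟨hmmin, hmC⟩
    exact hPd (c0 ⊔ a) ⟨c0, hc0, rfl⟩ (hPprime.1.2.2 a (hmP ham) _ le_sup_right)
end
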